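/- arXiv:1810.02722 — 2 statements merged into one kernel-verified Lean document; each statement's English description precedes it below -/
import Mathlib

section
/- Let (F_j)_{j=0}^N be a filtration on a probability space and let (Z_j)_{j=1}^N be a real-valued process adapted to (F_j) such that almost surely 0 ≤ Z_j ≤ B and E[Z_j | F_{j-1}] ≤ m for every 1 ≤ j ≤ N. Then for every λ ≥ 2Nm one has P(∑_{j=1}^N Z_j ≥ λ) ≤ exp(−3λ/(16B)). -/
open MeasureTheory ProbabilityTheory Filter

/-- **Bernstein corollary (Corollary 1.2).**  If `(Z_j)_{j=1}^N` is adapted to the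
filtration `(F_j)`, `0 ≤ Z_j ≤ B` a.s., and `E[Z_j | F_{j-1}] ≤ m` a.s. for every
`1 ≤ j ≤ N`, then for every `λ ≥ 2 N m`,
`P(∑_{j=1}^N Z_j ≥ λ) ≤ exp (−3λ / (16 B))`. -/
theorem bernstein_corollary {Ω : Type*} {m0 : MeasurableSpace Ω} (μ : Measure Ω)
    [IsProbabilityMeasure μ] (F : Filtration ℕ m0) (N : ℕ) (Z : ℕ → Ω → ℝ) (B m lam : ℝ)
    (hadp : ∀ j, 1 ≤ j → j ≤ N → Measurable[F j] (Z j))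
    (hbdd : ∀ j, 1 ≤ j → j ≤ N → ∀ᵐ ω ∂μ, 0 ≤ Z j ω ∧ Z j ω ≤ B)
    (hcond : ∀ j, 1 ≤ j → j ≤ N → ∀ᵐ ω ∂μ, condExp (F (j - 1)) μ (Z j) ω ≤ m)
    (hlam : 2 * N * m ≤ lam) :
    μ {ω | lam ≤ ∑ j ∈ Finset.Icc 1 N, Z j ω} ≤
      ENNReal.ofReal (Real.exp (-(3 * lam) / (16 * B))) := by
  -- Trivial case: B = 0
  rcases eq_or_ne B 0 with hB0 | hB0
  · subst hB0
    simp only [mul_zero, div_zero, Real.exp_zero, ENNReal.ofReal_one]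
    exact prob_le_one
  -- Trivial case: B < 0
  rcases lt_or_gt_of_ne hB0 with hBneg | hB
  · rcases Nat.eq_zero_or_pos N with hN | hN
    · subst hN
      simp only [Nat.cast_zero, mul_zero, zero_mul] at hlam
      rcases eq_or_lt_of_le hlam with hl0 | hl0
      · simp only [← hl0, mul_zero, neg_zero, zero_div, Real.exp_zero, ENNReal.ofReal_one]
        exact prob_le_one
      · have hempty : {ω | lam ≤ ∑ j ∈ Finset.Icc 1 0, Z j ω} = ∅ := by
          ext ω
          simp only [Set.mem_setOf_eq, Set.mem_empty_iff_false, iff_false, not_le]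
          have : Finset.Icc 1 0 = (∅ : Finset ℕ) := Finset.Icc_eq_empty (by omega)
          rw [this, Finset.sum_empty]
          exact hl0
        rw [hempty]
        simp
    · exfalso
      haveI : (ae μ).NeBot := ae_neBot.mpr (IsProbabilityMeasure.ne_zero μ)
      obtain ⟨ω, h0, hB'⟩ := (hbdd 1 le_rfl hN).exists
      linarith
  -- Trivial case: lam ≤ 0 (with B > 0)
  rcases le_or_gt lam 0 with hlneg | hlam_pos
  · have h1 : (1 : ℝ) ≤ Real.exp (-(3 * lam) / (16 * B)) := by
      rw [← Real.exp_zero]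
      exact Real.exp_le_exp.mpr (div_nonneg (by linarith) (by linarith))
    calc μ _ ≤ 1 := prob_le_one
      _ ≤ ENNReal.ofReal (Real.exp (-(3 * lam) / (16 * B))) := by
          rw [← ENNReal.ofReal_one]; exact ENNReal.ofReal_le_ofReal h1
  -- Main case: B > 0, lam > 0
  set s : ℝ := Real.log 2 / B with hs_def
  have hs : 0 < s := div_pos (Real.log_pos one_lt_two) hB
  have hmeas : ∀ j, 1 ≤ j → j ≤ N → Measurable (Z j) :=
    fun j h1 h2 => (hadp j h1 h2).mono (F.le j) le_rfl
  have hint : ∀ j, 1 ≤ j → j ≤ N → Integrable (Z j) μ := by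
    intro j h1 h2
    refine Integrable.mono' (integrable_const B) (hmeas j h1 h2).aestronglyMeasurable ?_
    filter_upwards [hbdd j h1 h2] with ω hω
    rw [Real.norm_eq_abs, abs_le]
    exact ⟨by linarith [hω.1, hB.le], hω.2⟩
  -- convexity bound : exp (s z) ≤ 1 + z / B on [0, B]
  have hconv : ∀ z : ℝ, 0 ≤ z → z ≤ B → Real.exp (s * z) ≤ 1 + z / B := by
    intro z h0 hzB
    have ht0 : 0 ≤ z / B := div_nonneg h0 hB.le
    have ht1 : z / B ≤ 1 := (div_le_one hB).mpr hzB
    have hc := convexOn_exp.2 (Set.mem_univ (0 : ℝ)) (Set.mem_univ (Real.log 2))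
      (by linarith : (0:ℝ) ≤ 1 - z / B) ht0 (by ring)
    simp only [smul_eq_mul, mul_zero, zero_add, Real.exp_zero, mul_one,
      Real.exp_log two_pos] at hc
    have hsz : s * z = (z / B) * Real.log 2 := by
      rw [hs_def]; field_simp
    rw [hsz]; linarith
  -- integrability of exp (s * Z j)
  have hintexp : ∀ j, 1 ≤ j → j ≤ N →
      Integrable (fun ω => Real.exp (s * Z j ω)) μ := by
    intro j h1 h2
    refine Integrable.mono' (integrable_const 2)
      ((Real.measurable_exp.comp (measurable_const.mul (hmeas j h1 h2))).aestronglyMeasurable) ?_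
    filter_upwards [hbdd j h1 h2] with ω hω
    rw [Real.norm_eq_abs, abs_of_pos (Real.exp_pos _)]
    have h2' : Z j ω / B ≤ 1 := (div_le_one hB).mpr hω.2
    linarith [hconv (Z j ω) hω.1 hω.2]
  -- conditional expectation bound on exp (s * Z j)
  have hce : ∀ j, 1 ≤ j → j ≤ N →
      ∀ᵐ ω ∂μ, (μ[fun ω => Real.exp (s * Z j ω)|F (j - 1)]) ω ≤ Real.exp (m / B) := by
    intro j h1 h2
    have hZint := hint j h1 h2
    have hmono := condExp_mono (m := F (j - 1)) (μ := μ) (hintexp j h1 h2)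
      ((integrable_const (1:ℝ)).add (hZint.smul (B⁻¹ : ℝ)))
      (by
        filter_upwards [hbdd j h1 h2] with ω hω
        have := hconv (Z j ω) hω.1 hω.2
        simpa [div_eq_inv_mul] using this)
    have hadd := condExp_add (m := F (j - 1)) (μ := μ) (integrable_const (1:ℝ))
      (hZint.smul (B⁻¹ : ℝ))
    have hsmul := condExp_smul (m := F (j - 1)) (μ := μ) (B⁻¹ : ℝ) (Z j)
    filter_upwards [hmono, hadd, hsmul, hcond j h1 h2] with ω hω1 hω2 hω3 hω4
    have h1' : (μ[(fun _ => (1:ℝ)) + B⁻¹ • Z j|F (j - 1)]) ω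
        = 1 + B⁻¹ * (μ[Z j|F (j-1)]) ω := by
      rw [hω2]
      simp only [Pi.add_apply, hω3, Pi.smul_apply, smul_eq_mul,
        condExp_const (F.le (j-1)) (1:ℝ)]
    have hle : (μ[fun ω => Real.exp (s * Z j ω)|F (j - 1)]) ω ≤ 1 + B⁻¹ * m := by
      refine le_trans hω1 ?_
      rw [h1']
      have : B⁻¹ * (μ[Z j|F (j-1)]) ω ≤ B⁻¹ * m :=
        mul_le_mul_of_nonneg_left hω4 (inv_nonneg.mpr hB.le)
      linarith
    refine le_trans hle ?_
    have h3 := Real.add_one_le_exp (m / B)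
    rw [div_eq_inv_mul]
    rw [div_eq_inv_mul] at h3
    linarith
  -- key induction : the mgf bound for partial sums
  have key : ∀ n, n ≤ N →
      Integrable (fun ω => Real.exp (s * ∑ j ∈ Finset.Icc 1 n, Z j ω)) μ ∧
      ∫ ω, Real.exp (s * ∑ j ∈ Finset.Icc 1 n, Z j ω) ∂μ ≤ Real.exp (n * m / B) := by
    intro n
    induction n with
    | zero =>
      intro _
      have hempty : Finset.Icc 1 0 = (∅ : Finset ℕ) := Finset.Icc_eq_empty (by omega)
      rw [hempty]
      simp only [Finset.sum_empty, mul_zero, Real.exp_zero, Nat.cast_zero, zero_mul,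
        zero_div]
      exact ⟨integrable_const 1, by simp⟩
    | succ n ih =>
      intro hn1
      have hn : n ≤ N := Nat.le_of_succ_le hn1
      obtain ⟨ihInt, ihLe⟩ := ih hn
      have h1n : 1 ≤ n + 1 := Nat.succ_le_succ (Nat.zero_le n)
      have hsplit : ∀ ω, ∑ j ∈ Finset.Icc 1 (n+1), Z j ω
          = (∑ j ∈ Finset.Icc 1 n, Z j ω) + Z (n+1) ω := by
        intro ω
        rw [← Finset.insert_Icc_right_eq_Icc_add_one h1n, Finset.sum_insert (by simp)]
        ring
      set f : Ω → ℝ := fun ω => Real.exp (s * ∑ j ∈ Finset.Icc 1 n, Z j ω) with hf_def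
      set g : Ω → ℝ := fun ω => Real.exp (s * Z (n+1) ω) with hg_def
      have hexp_split : (fun ω => Real.exp (s * ∑ j ∈ Finset.Icc 1 (n+1), Z j ω)) = f * g := by
        funext ω
        simp only [hsplit ω, mul_add, Real.exp_add, hf_def, hg_def, Pi.mul_apply]
      have hsum_measFn : Measurable[F n] (fun ω => ∑ j ∈ Finset.Icc 1 n, Z j ω) := by
        apply Finset.measurable_sum
        intro j hj
        rw [Finset.mem_Icc] at hj
        exact ((hadp j hj.1 (hj.2.trans hn)).mono (F.mono hj.2) le_rfl)
      have hf_measFn : StronglyMeasurable[F n] f :=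
        (Real.measurable_exp.comp (measurable_const.mul hsum_measFn)).stronglyMeasurable
      have hf_meas : Measurable f :=
        Real.measurable_exp.comp (measurable_const.mul (hsum_measFn.mono (F.le n) le_rfl))
      -- a.s. bounds on the partial sum
      have hsum_bd : ∀ᵐ ω ∂μ, 0 ≤ (∑ j ∈ Finset.Icc 1 n, Z j ω) ∧
          (∑ j ∈ Finset.Icc 1 n, Z j ω) ≤ n * B := by
        have hae : ∀ᵐ ω ∂μ, ∀ j ∈ Finset.Icc 1 n, 0 ≤ Z j ω ∧ Z j ω ≤ B := by
          rw [Finset.eventually_all]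
          intro j hj
          rw [Finset.mem_Icc] at hj
          exact hbdd j hj.1 (hj.2.trans hn)
        filter_upwards [hae] with ω hω
        constructor
        · exact Finset.sum_nonneg fun j hj => (hω j hj).1
        · calc (∑ j ∈ Finset.Icc 1 n, Z j ω) ≤ (Finset.Icc 1 n).card • B :=
                Finset.sum_le_card_nsmul _ _ B fun j hj => (hω j hj).2
            _ = n * B := by
                rw [Nat.card_Icc]
                simp [nsmul_eq_mul]
      have hg_int := hintexp (n+1) h1n hn1
      have hfg_int : Integrable (f * g) μ := by
        refine Integrable.mono' (integrable_const (Real.exp (s * (n * B)) * 2))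
          ((hf_meas.mul (Real.measurable_exp.comp
            (measurable_const.mul (hmeas (n+1) h1n hn1)))).aestronglyMeasurable) ?_
        filter_upwards [hsum_bd, hbdd (n+1) h1n hn1] with ω h1 h2
        rw [Pi.mul_apply, Real.norm_eq_abs,
          abs_of_pos (mul_pos (Real.exp_pos _) (Real.exp_pos _))]
        have hfb : f ω ≤ Real.exp (s * (n * B)) :=
          Real.exp_le_exp.2 (mul_le_mul_of_nonneg_left h1.2 hs.le)
        have hgb : g ω ≤ 2 := by
          have h2' : Z (n+1) ω / B ≤ 1 := (div_le_one hB).mpr h2.2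
          have := hconv (Z (n+1) ω) h2.1 h2.2
          simp only [hg_def]
          linarith
        exact mul_le_mul hfb hgb (Real.exp_pos _).le (Real.exp_pos _).le
      have hce' : ∀ᵐ ω ∂μ, (μ[g|F n]) ω ≤ Real.exp (m / B) := by
        have := hce (n+1) h1n hn1
        simpa using this
      have hpull := condExp_mul_of_stronglyMeasurable_left (μ := μ) hf_measFn hfg_int hg_int
      constructor
      · rw [hexp_split]; exact hfg_int
      · calc ∫ ω, Real.exp (s * ∑ j ∈ Finset.Icc 1 (n+1), Z j ω) ∂μ
            = ∫ ω, (f * g) ω ∂μ := by rw [hexp_split]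
          _ = ∫ ω, (μ[f * g|F n]) ω ∂μ := (integral_condExp (F.le n)).symm
          _ ≤ ∫ ω, f ω * Real.exp (m / B) ∂μ := by
              refine integral_mono_ae integrable_condExp (ihInt.mul_const _) ?_
              filter_upwards [hpull, hce'] with ω h1 h2
              rw [h1, Pi.mul_apply]
              exact mul_le_mul_of_nonneg_left h2 (Real.exp_pos _).le
          _ = (∫ ω, f ω ∂μ) * Real.exp (m / B) := integral_mul_const _ _
          _ ≤ Real.exp (n * m / B) * Real.exp (m / B) :=
              mul_le_mul_of_nonneg_right ihLe (Real.exp_pos _).le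
          _ = Real.exp ((n+1 : ℕ) * m / B) := by
              rw [← Real.exp_add]
              congr 1
              push_cast
              ring
  obtain ⟨hNint, hNle⟩ := key N le_rfl
  have hch := measure_ge_le_exp_mul_mgf (μ := μ)
    (X := fun ω => ∑ j ∈ Finset.Icc 1 N, Z j ω) lam hs.le hNint
  have hfinal : (μ {ω | lam ≤ ∑ j ∈ Finset.Icc 1 N, Z j ω}).toReal
      ≤ Real.exp (-(3 * lam) / (16 * B)) := by
    refine hch.trans ?_
    calc Real.exp (-s * lam) * mgf (fun ω => ∑ j ∈ Finset.Icc 1 N, Z j ω) μ s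
        ≤ Real.exp (-s * lam) * Real.exp (N * m / B) :=
          mul_le_mul_of_nonneg_left hNle (Real.exp_pos _).le
      _ = Real.exp (N * m / B - s * lam) := by rw [← Real.exp_add]; ring_nf
      _ ≤ Real.exp (-(3 * lam) / (16 * B)) := by
          apply Real.exp_le_exp.2
          have hlog : (0.6931471803 : ℝ) < Real.log 2 := Real.log_two_gt_d9
          have e1 : (N : ℝ) * m / B - s * lam = ((N : ℝ) * m - Real.log 2 * lam) / B := by
            rw [hs_def]; ring
          have e2 : -(3 * lam) / (16 * B) = (-(3 / 16) * lam) / B := by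
            field_simp
          rw [e1, e2]
          have hmul : (0.6931471803 : ℝ) * lam ≤ Real.log 2 * lam :=
            mul_le_mul_of_nonneg_right hlog.le hlam_pos.le
          have hnum : (N : ℝ) * m - Real.log 2 * lam ≤ -(3 / 16) * lam := by
            linarith
          exact (div_le_div_iff_of_pos_right hB).mpr hnum
  rw [← ENNReal.ofReal_toReal (measure_ne_top μ _)]
  exact ENNReal.ofReal_le_ofReal hfinal
end

section
/- Let G be a k-regular graph on n vertices whose adjacency matrix A has all non-principal eigenvalues bounded in absolute value by some λ̃ < k. For t ≥ 1 let A^{(t)}_{u,v} be the number of non-backtracking walks of length t from u to v in G and set P̃^{(t)} = A^{(t)}/(k(k−1)^{t−1}). Let ψ(x) = 1 for 0 ≤ x ≤ 1 and ψ(x) = x + √(x² − 1) for x ≥ 1, and set β = ψ(λ̃/(2√(k−1)))/√(k−1), so that β < 1. Then for every t ≥ 2, max over vertices u, v of |P̃^{(t)}_{u,v} − 1/n| ≤ ((k−1)/k)(t+1)β^t + (1/(k(k−1)))(t−1)β^{t−2}. -/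
noncomputable section

/-- `G` is `k`-regular. -/
def kRegular {V : Type} (G : SimpleGraph V) (k : ℕ) : Prop :=
  ∀ v, (G.neighborSet v).ncard = k

open scoped Classical in
/-- The (real) adjacency matrix of a simple graph. -/
def adjMat {V : Type} (G : SimpleGraph V) : Matrix V V ℝ :=
  Matrix.of fun u v => if G.Adj u v then 1 else 0

/-- The number of non-backtracking walks of length `t` from `u` to `v` in `G`. -/
def nbWalkCount {V : Type} (G : SimpleGraph V) (t : ℕ) (u v : V) : ℕ :=
  Nat.card {p : Fin (t + 1) → V //
    p 0 = u ∧ p (Fin.last t) = v ∧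
    (∀ s : ℕ, (h : s + 1 ≤ t) → G.Adj (p ⟨s, by omega⟩) (p ⟨s + 1, by omega⟩)) ∧
    (∀ s : ℕ, (h : s + 2 ≤ t) → p ⟨s + 2, by omega⟩ ≠ p ⟨s, by omega⟩)}

/-- `ψ(x) = 1` for `x ≤ 1` and `ψ(x) = x + √(x² − 1)` for `x ≥ 1`. -/
def psi (x : ℝ) : ℝ := if x ≤ 1 then 1 else x + Real.sqrt (x ^ 2 - 1)


open Finset Matrix

namespace NBHelp
open scoped Classical
set_option linter.unusedSectionVars false
set_option linter.unusedVariables false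
set_option maxHeartbeats 1000000

-- ## Combinatorial part
variable {V : Type} [Fintype V] [DecidableEq V] (G : SimpleGraph V)

def nbPred (t : ℕ) (u v : V) (p : Fin (t + 1) → V) : Prop :=
  p 0 = u ∧ p (Fin.last t) = v ∧
    (∀ s : ℕ, (h : s + 1 ≤ t) → G.Adj (p ⟨s, by omega⟩) (p ⟨s + 1, by omega⟩)) ∧
    (∀ s : ℕ, (h : s + 2 ≤ t) → p ⟨s + 2, by omega⟩ ≠ p ⟨s, by omega⟩)

lemma nbWalkCount_eq (t : ℕ) (u v : V) :
    nbWalkCount G t u v = (univ.filter (nbPred G t u v)).card := by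
  show Nat.card {p // nbPred G t u v p} = _
  rw [Nat.card_eq_fintype_card]
  convert Fintype.card_subtype _ using 2

lemma adj_of_mem {t : ℕ} {u v w : V} {p : Fin (t + 2) → V}
    (hp : nbPred G (t + 1) u v p) (hw : p ⟨1, by omega⟩ = w) : G.Adj u w := by
  rw [← hp.1, ← hw]
  exact hp.2.2.1 0 (by omega)

lemma sum_ne_filter (m : ℕ) (u v : V) (k : ℕ)
    (hdeg : (univ.filter (G.Adj u ·)).card = k) :
    ∑ w, (if G.Adj u w then
        ((univ.filter (nbPred G (m + 1) u v)).filter (fun r => r ⟨1, by omega⟩ ≠ w)).card else 0)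
      = (k - 1) * (univ.filter (nbPred G (m + 1) u v)).card := by
  have step1 : ∀ w, (if G.Adj u w then
        ((univ.filter (nbPred G (m + 1) u v)).filter (fun r => r ⟨1, by omega⟩ ≠ w)).card else 0)
      = ∑ r ∈ univ.filter (nbPred G (m + 1) u v), (if G.Adj u w ∧ r ⟨1, by omega⟩ ≠ w then 1 else 0) := by
    intro w
    by_cases h : G.Adj u w
    · simp only [h, if_true, true_and, Finset.card_filter]
    · simp [h]
  rw [Finset.sum_congr rfl fun w _ => step1 w, Finset.sum_comm]
  have step2 : ∀ r ∈ univ.filter (nbPred G (m + 1) u v),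
      (∑ w, if G.Adj u w ∧ r ⟨1, by omega⟩ ≠ w then 1 else 0) = k - 1 := by
    intro r hr
    have hradj : G.Adj u (r ⟨1, by omega⟩) := by
      simp only [mem_filter, mem_univ, true_and] at hr
      exact adj_of_mem G hr rfl
    rw [← Finset.card_filter]
    have h2 : (univ.filter (fun w => G.Adj u w ∧ r ⟨1, by omega⟩ ≠ w))
        = (univ.filter (G.Adj u ·)).erase (r ⟨1, by omega⟩) := by
      ext w
      simp only [mem_filter, mem_univ, true_and, Finset.mem_erase]
      tauto
    rw [h2, Finset.card_erase_of_mem (by simpa using hradj), hdeg]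
  rw [Finset.sum_congr rfl step2, Finset.sum_const, smul_eq_mul, mul_comm]
def tl {m : ℕ} (p : Fin (m + 2) → V) : Fin (m + 1) → V := fun i => p ⟨i.1 + 1, by omega⟩

def cns {m : ℕ} (a : V) (q : Fin (m + 1) → V) : Fin (m + 2) → V :=
  fun i => if h : i.1 = 0 then a else q ⟨i.1 - 1, by omega⟩

lemma cns_succ {m : ℕ} (a : V) (q : Fin (m + 1) → V) (s : ℕ) (h : s + 1 < m + 2) :
    cns a q ⟨s + 1, h⟩ = q ⟨s, by omega⟩ := rfl

lemma cns_zero {m : ℕ} (a : V) (q : Fin (m + 1) → V) : cns a q 0 = a := rfl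

lemma fin_zero_mk (n : ℕ) : (0 : Fin (n + 1)) = ⟨0, by omega⟩ := rfl

/-- Key bijection: walks of length `m+2` from `a` to `v` whose second vertex is `b`
correspond to walks of length `m+1` from `b` to `v` whose second vertex is not `a`. -/
lemma glemma (m : ℕ) (a b v : V) (hab : G.Adj a b) :
    ((univ.filter (nbPred G (m + 2) a v)).filter (fun p => p ⟨1, by omega⟩ = b)).card
      = ((univ.filter (nbPred G (m + 1) b v)).filter (fun q => q ⟨1, by omega⟩ ≠ a)).card := by
  apply Finset.card_bij' (fun p _ => tl p) (fun q _ => cns a q)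
  · -- tl maps into target
    intro p hp
    simp only [mem_filter, mem_univ, true_and] at hp ⊢
    obtain ⟨⟨h0, hl, h1, h2⟩, hb⟩ := hp
    refine ⟨⟨hb, ?_, ?_, ?_⟩, ?_⟩
    · show p ⟨m + 2, by omega⟩ = v
      exact hl
    · intro s hs
      show G.Adj (p ⟨s + 1, by omega⟩) (p ⟨s + 2, by omega⟩)
      exact h1 (s + 1) (by omega)
    · intro s hs
      show p ⟨s + 3, by omega⟩ ≠ p ⟨s + 1, by omega⟩
      exact h2 (s + 1) (by omega)
    · show p ⟨2, by omega⟩ ≠ a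
      rw [← h0]
      exact h2 0 (by omega)
  · -- cns maps into source
    intro q hq
    simp only [mem_filter, mem_univ, true_and] at hq ⊢
    obtain ⟨⟨h0, hl, h1, h2⟩, hne⟩ := hq
    refine ⟨⟨rfl, ?_, ?_, ?_⟩, ?_⟩
    · show q ⟨m + 1, by omega⟩ = v
      exact hl
    · intro s hs
      match s with
      | 0 =>
        show G.Adj a (q ⟨0, by omega⟩)
        rw [show (⟨0, by omega⟩ : Fin (m + 2)) = 0 from rfl, h0]
        exact hab
      | s + 1 =>
        show G.Adj (q ⟨s, by omega⟩) (q ⟨s + 1, by omega⟩)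
        exact h1 s (by omega)
    · intro s hs
      match s with
      | 0 =>
        show q ⟨1, by omega⟩ ≠ a
        exact hne
      | s + 1 =>
        show q ⟨s + 2, by omega⟩ ≠ q ⟨s, by omega⟩
        exact h2 s (by omega)
    · show q ⟨0, by omega⟩ = b
      exact h0
  · -- left inverse
    intro p hp
    simp only [mem_filter, mem_univ, true_and] at hp
    funext i
    rcases i with ⟨i, hi⟩
    match i with
    | 0 => exact hp.1.1.symm
    | i + 1 => rfl
  · -- right inverse
    intro q hq
    funext i
    rfl


lemma fiber_card (m : ℕ) (u v w : V) :
    ((univ.filter (nbPred G (m + 3) u v)).filter (fun p => p ⟨1, by omega⟩ = w)).card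
      = if G.Adj u w then
          ((univ.filter (nbPred G (m + 2) w v)).filter (fun q => q ⟨1, by omega⟩ ≠ u)).card
        else 0 := by
  by_cases h : G.Adj u w
  · rw [if_pos h]
    exact glemma G (m + 1) u w v h
  · rw [if_neg h, Finset.card_eq_zero, Finset.eq_empty_iff_forall_notMem]
    intro p hp
    simp only [mem_filter, mem_univ, true_and] at hp
    exact h (adj_of_mem G hp.1 hp.2)

lemma card_fiberwise (m : ℕ) (u v : V) :
    (univ.filter (nbPred G (m + 3) u v)).card
      = ∑ w, ((univ.filter (nbPred G (m + 3) u v)).filter (fun p => p ⟨1, by omega⟩ = w)).card :=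
  Finset.card_eq_sum_card_fiberwise (fun p _ => mem_univ _)

lemma split_card (m : ℕ) (w v u : V) :
    ((univ.filter (nbPred G (m + 2) w v)).filter (fun q => q ⟨1, by omega⟩ ≠ u)).card
      + ((univ.filter (nbPred G (m + 2) w v)).filter (fun (q : Fin (m + 3) → V) => q ⟨1, by omega⟩ = u)).card
      = (univ.filter (nbPred G (m + 2) w v)).card := by
  rw [Finset.card_filter, Finset.card_filter, ← Finset.sum_add_distrib]
  rw [Finset.card_eq_sum_ones]
  refine Finset.sum_congr rfl fun q _ => ?_
  by_cases h : q 1 = u <;> simp [h]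

/-- The main recurrence, in ℕ (avoiding subtraction). -/
lemma rec_nat (m : ℕ) (u v : V) (k : ℕ) (hdeg : (univ.filter (G.Adj u ·)).card = k) :
    (univ.filter (nbPred G (m + 3) u v)).card
        + (k - 1) * (univ.filter (nbPred G (m + 1) u v)).card
      = ∑ w, if G.Adj u w then (univ.filter (nbPred G (m + 2) w v)).card else 0 := by
  rw [card_fiberwise, ← sum_ne_filter G m u v k hdeg, ← Finset.sum_add_distrib]
  refine Finset.sum_congr rfl fun w _ => ?_
  rw [fiber_card]
  by_cases h : G.Adj u w
  · rw [if_pos h, if_pos h, if_pos h, ← glemma G m w u v h.symm]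
    exact split_card G m w v u
  · simp [h]

lemma walk1_card (u v : V) :
    (univ.filter (nbPred G 1 u v)).card = if G.Adj u v then 1 else 0 := by
  by_cases h : G.Adj u v
  · rw [if_pos h, Finset.card_eq_one]
    refine ⟨fun i => if i.1 = 0 then u else v, ?_⟩
    rw [Finset.eq_singleton_iff_unique_mem]
    constructor
    · simp only [mem_filter, mem_univ, true_and]
      refine ⟨rfl, rfl, ?_, ?_⟩
      · intro s hs
        match s with
        | 0 => exact h
        | s + 1 => omega
      · intro s hs
        omega
    · intro p hp
      simp only [mem_filter, mem_univ, true_and] at hp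
      obtain ⟨h0, hl, h1, h2⟩ := hp
      funext i
      rcases i with ⟨i, hi⟩
      match i with
      | 0 => exact h0
      | 1 => exact hl
  · rw [if_neg h, Finset.card_eq_zero, Finset.eq_empty_iff_forall_notMem]
    intro p hp
    simp only [mem_filter, mem_univ, true_and] at hp
    obtain ⟨h0, hl, h1, h2⟩ := hp
    exact h (h0 ▸ hl ▸ h1 0 (by omega))

lemma walk2_card (u v : V) :
    (univ.filter (nbPred G 2 u v)).card
      = (univ.filter (fun w => G.Adj u w ∧ G.Adj w v ∧ v ≠ u)).card := by
  refine Finset.card_bij' (fun p _ => p ⟨1, by omega⟩)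
      (fun w _ => (fun i => if i.1 = 0 then u else if i.1 = 1 then w else v)) ?_ ?_ ?_ ?_
  · intro p hp
    simp only [mem_filter, mem_univ, true_and] at hp ⊢
    obtain ⟨h0, hl, h1, h2⟩ := hp
    refine ⟨?_, ?_, ?_⟩
    · rw [← h0]; exact h1 0 (by omega)
    · rw [← hl]; exact h1 1 (by omega)
    · rw [← h0, ← hl]; exact h2 0 (by omega)
  · intro w hw
    simp only [mem_filter, mem_univ, true_and] at hw ⊢
    obtain ⟨h1, h2, h3⟩ := hw
    refine ⟨rfl, rfl, ?_, ?_⟩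
    · intro s hs
      match s with
      | 0 => exact h1
      | 1 => exact h2
      | s + 2 => omega
    · intro s hs
      match s with
      | 0 => exact h3
      | s + 1 => omega
  · intro p hp
    simp only [mem_filter, mem_univ, true_and] at hp
    obtain ⟨h0, hl, h1, h2⟩ := hp
    funext i
    rcases i with ⟨i, hi⟩
    match i with
    | 0 => exact h0.symm
    | 1 => rfl
    | 2 => exact hl.symm
  · intro w hw
    rfl



-- ## Analytic part
def useq : ℕ → ℝ → ℝ
  | 0, _ => 1
  | 1, y => 2 * y
  | (n+2), y => 2 * y * useq (n+1) y - useq n y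

lemma psi_ge_one (x : ℝ) : 1 ≤ psi x := by
  rw [psi]
  split_ifs with h
  · exact le_refl 1
  · push_neg at h
    have : 0 ≤ Real.sqrt (x ^ 2 - 1) := Real.sqrt_nonneg _
    linarith

lemma psi_mono {x y : ℝ} (h : x ≤ y) : psi x ≤ psi y := by
  rw [psi, psi]
  split_ifs with h1 h2 h2
  · exact le_refl 1
  · push_neg at h2
    have : 0 ≤ Real.sqrt (y ^ 2 - 1) := Real.sqrt_nonneg _
    linarith
  · exact absurd (le_trans h h2) h1
  · push_neg at h1 h2
    have hx0 : (0:ℝ) < x := lt_trans one_pos h1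
    have : Real.sqrt (x ^ 2 - 1) ≤ Real.sqrt (y ^ 2 - 1) := by
      apply Real.sqrt_le_sqrt
      nlinarith
    linarith

lemma sin_bound : ∀ (n : ℕ) (θ : ℝ), |Real.sin (n * θ)| ≤ n * |Real.sin θ| := by
  intro n θ
  induction n with
  | zero => simp
  | succ n ih =>
    have e : ((n + 1 : ℕ) : ℝ) * θ = n * θ + θ := by push_cast; ring
    rw [e, Real.sin_add]
    have c1 : |Real.sin (n*θ) * Real.cos θ| ≤ (n:ℝ) * |Real.sin θ| := by
      rw [abs_mul]
      calc |Real.sin (n*θ)| * |Real.cos θ| ≤ |Real.sin (n*θ)| * 1 :=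
            mul_le_mul_of_nonneg_left (Real.abs_cos_le_one θ) (abs_nonneg _)
        _ = |Real.sin (n*θ)| := mul_one _
        _ ≤ n * |Real.sin θ| := ih
    have c2 : |Real.cos (n*θ) * Real.sin θ| ≤ 1 * |Real.sin θ| := by
      rw [abs_mul]
      exact mul_le_mul_of_nonneg_right (Real.abs_cos_le_one _) (abs_nonneg _)
    calc |Real.sin (n*θ) * Real.cos θ + Real.cos (n*θ) * Real.sin θ|
        ≤ |Real.sin (n*θ) * Real.cos θ| + |Real.cos (n*θ) * Real.sin θ| := abs_add_le _ _
      _ ≤ (n:ℝ) * |Real.sin θ| + 1 * |Real.sin θ| := add_le_add c1 c2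
      _ = (n + 1 : ℕ) * |Real.sin θ| := by push_cast; ring

lemma useq_cos : ∀ (n : ℕ) (θ : ℝ), useq n (Real.cos θ) * Real.sin θ = Real.sin ((n + 1) * θ) := by
  intro n
  induction n using Nat.twoStepInduction with
  | zero => intro θ; simp [useq]
  | one => intro θ; rw [useq]; push_cast; rw [show ((1:ℝ)+1)*θ = 2*θ by ring, Real.sin_two_mul]; ring
  | more n ih1 ih2 =>
    intro θ
    rw [useq]
    have e1 : ((n + 2 : ℕ) : ℝ) + 1 = (((n+1 : ℕ) : ℝ) + 1) + 1 := by push_cast; ring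
    have e2 : ((n : ℕ) : ℝ) + 1 = (((n+1 : ℕ) : ℝ) + 1) - 1 := by push_cast; ring
    rw [sub_mul, mul_assoc, ih1, ih2, e1, e2]
    rw [show ((((n+1:ℕ):ℝ) + 1) + 1) * θ = ((((n+1:ℕ):ℝ) + 1)) * θ + θ by ring,
        show ((((n+1:ℕ):ℝ) + 1) - 1) * θ = ((((n+1:ℕ):ℝ) + 1)) * θ - θ by ring,
        Real.sin_add, Real.sin_sub]
    ring

lemma useq_neg : ∀ (n : ℕ) (y : ℝ), useq n (-y) = (-1) ^ n * useq n y := by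
  intro n
  induction n using Nat.twoStepInduction with
  | zero => intro y; simp [useq]
  | one => intro y; show 2 * -y = (-1)^1 * (2*y); ring
  | more n ih1 ih2 =>
    intro y
    rw [useq, useq, ih1, ih2]
    ring

lemma useq_one (n : ℕ) : useq n 1 = n + 1 := by
  induction n using Nat.twoStepInduction with
  | zero => simp [useq]
  | one => rw [useq]; push_cast; ring
  | more n ih1 ih2 =>
    rw [useq, ih1, ih2]
    push_cast
    ring

lemma useq_le_of_le_one {y : ℝ} (hy : |y| ≤ 1) (n : ℕ) : |useq n y| ≤ n + 1 := by
  rcases lt_or_eq_of_le hy with h | h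
  · have hb := abs_lt.mp h
    have hcos : Real.cos (Real.arccos y) = y := Real.cos_arccos (by linarith) (by linarith)
    have hsin : Real.sin (Real.arccos y) = Real.sqrt (1 - y ^ 2) := Real.sin_arccos y
    have hsinpos : 0 < Real.sin (Real.arccos y) := by
      rw [hsin]
      apply Real.sqrt_pos.mpr
      nlinarith
    have hsb := sin_bound (n+1) (Real.arccos y)
    push_cast at hsb
    have key : |useq n y| * Real.sin (Real.arccos y) ≤ ((n:ℝ) + 1) * Real.sin (Real.arccos y) := by
      calc |useq n y| * Real.sin (Real.arccos y)
          = |useq n y * Real.sin (Real.arccos y)| := by rw [abs_mul, abs_of_pos hsinpos]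
        _ = |Real.sin (((n:ℝ)+1) * Real.arccos y)| := by rw [← useq_cos n (Real.arccos y), hcos]
        _ ≤ ((n:ℝ)+1) * |Real.sin (Real.arccos y)| := hsb
        _ = ((n:ℝ) + 1) * Real.sin (Real.arccos y) := by rw [abs_of_pos hsinpos]
    exact le_of_mul_le_mul_right key hsinpos
  · rcases (abs_eq (by norm_num : (0:ℝ) ≤ 1)).mp h with h1 | h1
    · rw [h1, useq_one, abs_of_nonneg (by positivity)]
    · subst h1
      have h3 : useq n (-1 : ℝ) = (-1)^n * useq n (1:ℝ) := useq_neg n 1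
      rw [h3, abs_mul, abs_pow, abs_neg, abs_one, one_pow, one_mul, useq_one,
        abs_of_nonneg (by positivity)]

lemma useq_identity {x : ℝ} (hx : 1 < x) :
    ∀ n : ℕ, useq n x * (2 * Real.sqrt (x ^ 2 - 1))
      = (x + Real.sqrt (x ^ 2 - 1)) ^ (n + 1) - (x - Real.sqrt (x ^ 2 - 1)) ^ (n + 1) := by
  set s := Real.sqrt (x ^ 2 - 1) with hs
  have hs2 : s ^ 2 = x ^ 2 - 1 := Real.sq_sqrt (by nlinarith)
  have hprod : (x + s) * (x - s) = 1 := by nlinarith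
  intro n
  induction n using Nat.twoStepInduction with
  | zero => simp [useq]; ring
  | one => rw [useq]; ring
  | more n ih1 ih2 =>
    rw [useq]
    calc (2 * x * useq (n + 1) x - useq n x) * (2 * s)
        = 2 * x * (useq (n+1) x * (2*s)) - useq n x * (2*s) := by ring
      _ = 2 * x * ((x+s)^(n+1+1) - (x-s)^(n+1+1)) - ((x+s)^(n+1) - (x-s)^(n+1)) := by rw [ih1, ih2]
      _ = (x+s)^(n+2+1) - (x-s)^(n+2+1) := by
          linear_combination ((x+s)^(n+1) - (x-s)^(n+1)) * hprod

lemma useq_bound_gt_one {x : ℝ} (hx : 1 < x) (n : ℕ) :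
    0 ≤ useq n x ∧ useq n x ≤ (n + 1) * (x + Real.sqrt (x ^ 2 - 1)) ^ n := by
  set s := Real.sqrt (x ^ 2 - 1) with hs
  have hs2 : s ^ 2 = x ^ 2 - 1 := Real.sq_sqrt (by nlinarith)
  have hsnn : 0 ≤ s := Real.sqrt_nonneg _
  have hspos : 0 < s := Real.sqrt_pos.mpr (by nlinarith)
  have hsx : s ≤ x := by nlinarith
  have hphi : 0 ≤ x - s := by linarith
  have hle : x - s ≤ x + s := by linarith
  have hid := useq_identity hx n
  rw [← hs] at hid
  constructor
  · have h1 : (x - s) ^ (n+1) ≤ (x + s) ^ (n+1) := pow_le_pow_left₀ hphi hle _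
    have h2 : 0 * (2*s) ≤ useq n x * (2*s) := by rw [zero_mul]; linarith [hid]
    exact le_of_mul_le_mul_right h2 (by linarith : (0:ℝ) < 2*s)
  · have hgeom : (∑ i ∈ Finset.range (n+1), (x+s) ^ i * (x-s) ^ (n - i)) * ((x+s) - (x-s))
        = (x+s) ^ (n+1) - (x-s) ^ (n+1) := geom_sum₂_mul _ _ (n+1)
    have hsum_le : (∑ i ∈ Finset.range (n+1), (x+s) ^ i * (x-s) ^ (n - i)) ≤ (n+1) * (x+s) ^ n := by
      calc (∑ i ∈ Finset.range (n+1), (x+s) ^ i * (x-s) ^ (n - i))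
          ≤ ∑ _i ∈ Finset.range (n+1), (x+s) ^ n := by
            apply Finset.sum_le_sum
            intro i hi
            have hin : i ≤ n := Nat.lt_succ_iff.mp (Finset.mem_range.mp hi)
            calc (x+s) ^ i * (x-s) ^ (n - i) ≤ (x+s) ^ i * (x+s) ^ (n - i) := by
                  apply mul_le_mul_of_nonneg_left (pow_le_pow_left₀ hphi hle _) (by positivity)
              _ = (x+s) ^ n := by rw [← pow_add]; congr 1; omega
        _ = (n+1) * (x+s) ^ n := by rw [Finset.sum_const, Finset.card_range, nsmul_eq_mul]; push_cast; ring
    have h2s : (x+s) - (x-s) = 2 * s := by ring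
    rw [h2s] at hgeom
    have hfin : useq n x * (2*s) ≤ ((n+1) * (x+s)^n) * (2*s) := by
      rw [hid, ← hgeom]
      apply mul_le_mul_of_nonneg_right hsum_le (by linarith)
    exact le_of_mul_le_mul_right hfin (by linarith)

lemma useq_abs_bound (n : ℕ) (y : ℝ) : |useq n y| ≤ (n + 1) * psi |y| ^ n := by
  by_cases h : |y| ≤ 1
  · rw [psi, if_pos h, one_pow, mul_one]
    exact useq_le_of_le_one h n
  · push_neg at h
    have habs : |useq n y| = useq n |y| := by
      rcases le_or_gt 0 y with h0 | h0
      · rw [abs_of_nonneg h0]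
        rw [abs_of_nonneg h0] at h
        exact abs_of_nonneg (useq_bound_gt_one h n).1
      · rw [abs_of_neg h0]
        rw [abs_of_neg h0] at h
        have h2 : 0 ≤ useq n (-y) := (useq_bound_gt_one h n).1
        have h3 : useq n y = (-1)^n * useq n (-y) := by
          have := useq_neg n (-y)
          rwa [neg_neg] at this
        rw [h3, abs_mul, abs_pow, abs_neg, abs_one, one_pow, one_mul, abs_of_nonneg h2]
    rw [habs, psi, if_neg (not_le.mpr h)]
    exact (useq_bound_gt_one h n).2


def pt (k : ℕ) : ℕ → ℝ → ℝ
  | 0, _ => 1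
  | 1, x => x
  | 2, x => x ^ 2 - k
  | (n+3), x => x * pt k (n+2) x - ((k : ℝ) - 1) * pt k (n+1) x

lemma pt_eig (k : ℕ) : ∀ m : ℕ, pt k (m+2) (k : ℝ) = k * ((k:ℝ) - 1) ^ (m+1) := by
  intro m
  induction m using Nat.twoStepInduction with
  | zero => rw [pt]; ring
  | one =>
    show pt k 3 (k:ℝ) = _
    rw [show (3:ℕ) = 0+3 from rfl, pt]
    norm_num [pt]
    ring
  | more m ih1 ih2 =>
    rw [show m+2+2 = (m+1)+3 by omega, pt]
    rw [show m+1+2 = (m+1)+2 from rfl] at ih2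
    rw [show (m+1)+1+1 = m+1+2 from rfl, show (m+1)+1 = m+2 from rfl, ih1, ih2]
    ring

lemma pt_useq (k : ℕ) (r : ℝ) (hr : r ^ 2 = (k : ℝ) - 1) :
    ∀ (m : ℕ) (y : ℝ), pt k (m+2) (2*r*y) = r^(m+2) * useq (m+2) y - r^m * useq m y := by
  intro m
  induction m using Nat.twoStepInduction with
  | zero =>
    intro y
    norm_num [pt, useq]
    linear_combination hr
  | one =>
    intro y
    show pt k 3 (2*r*y) = _
    rw [show (3:ℕ) = 0+3 from rfl, pt]
    norm_num [pt, useq]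
    linear_combination (4*r*y) * hr
  | more m ih1 ih2 =>
    intro y
    rw [show m+2+2 = (m+1)+3 by omega, pt, show (m+1)+2 = m+1+2 from rfl, ih2,
      show (m+1)+1 = m+2 from rfl, ih1]
    have hu4 : useq (m+2+2) y = 2*y*useq (m+2+1) y - useq (m+2) y := by rw [useq]
    have hu2 : useq (m+2) y = 2*y*useq (m+1) y - useq m y := by rw [useq]
    rw [hu4, hu2, ← hr]
    ring



lemma pt_succ (k : ℕ) (n : ℕ) (x : ℝ) :
    pt k (n+3) x = x * pt k (n+2) x - ((k : ℝ) - 1) * pt k (n+1) x := by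
  rw [pt]

-- ## Spectral part
section Spectral
variable {A : Matrix V V ℝ} (hA : A.IsHermitian)

def Umat (hA : A.IsHermitian) : Matrix V V ℝ := (hA.eigenvectorUnitary : Matrix V V ℝ)

lemma hrow (u v : V) : ∑ i, Umat hA u i * Umat hA v i = if u = v then 1 else 0 := by
  have h := (Matrix.mem_unitaryGroup_iff).mp (hA.eigenvectorUnitary).2
  have := congrFun (congrFun h u) v
  simpa [Umat, Matrix.mul_apply, star_apply, Matrix.one_apply] using this

lemma hcol (i j : V) : ∑ u, Umat hA u i * Umat hA u j = if i = j then 1 else 0 := by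
  have h := (Matrix.mem_unitaryGroup_iff').mp (hA.eigenvectorUnitary).2
  have := congrFun (congrFun h i) j
  simpa [Umat, Matrix.mul_apply, star_apply, Matrix.one_apply, mul_comm] using this

lemma col_eig (i : V) (u : V) :
    ∑ w, A u w * Umat hA w i = hA.eigenvalues i * Umat hA u i := by
  have h : A * Umat hA = Umat hA * Matrix.diagonal hA.eigenvalues := by
    have h0 := congrArg (· * Umat hA) hA.spectral_theorem
    rw [h0]
    have hU : star (Umat hA) * Umat hA = 1 :=
      Matrix.mem_unitaryGroup_iff'.mp (hA.eigenvectorUnitary).2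
    calc (hA.eigenvectorUnitary : Matrix V V ℝ) * diagonal (RCLike.ofReal ∘ hA.eigenvalues)
          * star (hA.eigenvectorUnitary : Matrix V V ℝ) * Umat hA
        = Umat hA * diagonal (RCLike.ofReal ∘ hA.eigenvalues) * (star (Umat hA) * Umat hA) := by
          simp only [Umat, Matrix.mul_assoc]
      _ = Umat hA * Matrix.diagonal hA.eigenvalues := by
          rw [hU, Matrix.mul_one]
          rfl
  have := congrFun (congrFun h u) i
  simp only [Matrix.mul_apply, Matrix.diagonal_apply, mul_ite, mul_zero] at this
  rw [this, Finset.sum_ite_eq' univ i]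
  simp [mul_comm]

variable (i₀ : V) (k : ℕ) (lam : ℝ)

lemma col_sum_zero (hcolsum : ∀ w, ∑ v, A v w = k) (hlamk : lam < k)
    (hbound : ∀ i, i ≠ i₀ → |hA.eigenvalues i| ≤ lam)
    (i : V) (hi : i ≠ i₀) : ∑ v, Umat hA v i = 0 := by
  have h1 : hA.eigenvalues i * (∑ v, Umat hA v i) = k * (∑ v, Umat hA v i) := by
    calc hA.eigenvalues i * (∑ v, Umat hA v i) = ∑ v, hA.eigenvalues i * Umat hA v i := by
          rw [Finset.mul_sum]
      _ = ∑ v, ∑ w, A v w * Umat hA w i := by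
          refine Finset.sum_congr rfl fun v _ => (col_eig hA i v).symm
      _ = ∑ w, (∑ v, A v w) * Umat hA w i := by
          rw [Finset.sum_comm]
          simp [Finset.sum_mul]
      _ = ∑ w, (k : ℝ) * Umat hA w i := by
          refine Finset.sum_congr rfl fun w _ => by rw [hcolsum w]
      _ = k * (∑ v, Umat hA v i) := by rw [Finset.mul_sum]
  have hne : hA.eigenvalues i ≠ (k : ℝ) :=
    ne_of_lt (lt_of_le_of_lt (le_of_abs_le (hbound i hi)) hlamk)
  by_contra hc
  exact hne (mul_right_cancel₀ hc h1)

lemma principal_entry (hcolsum : ∀ w, ∑ v, A v w = k) (hlamk : lam < k)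
    (hbound : ∀ i, i ≠ i₀ → |hA.eigenvalues i| ≤ lam) (u v : V) :
    Umat hA u i₀ * Umat hA v i₀ = 1 / (Fintype.card V : ℝ) := by
  set c : ℝ := ∑ w, Umat hA w i₀ with hc
  have key : ∀ u, Umat hA u i₀ * c = 1 := by
    intro u
    have h1 : ∑ i, Umat hA u i * (∑ w, Umat hA w i) = 1 := by
      calc ∑ i, Umat hA u i * (∑ w, Umat hA w i)
          = ∑ i, ∑ w, Umat hA u i * Umat hA w i := by
            refine Finset.sum_congr rfl fun i _ => Finset.mul_sum _ _ _
        _ = ∑ w, ∑ i, Umat hA u i * Umat hA w i := Finset.sum_comm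
        _ = ∑ w, if u = w then 1 else 0 := Finset.sum_congr rfl fun w _ => hrow hA u w
        _ = 1 := by simp
    rw [← h1]
    symm
    apply Finset.sum_eq_single i₀
    · intro i _ hi
      rw [col_sum_zero hA i₀ k lam hcolsum hlamk hbound i hi, mul_zero]
    · intro h
      exact absurd (Finset.mem_univ i₀) h
  have hc0 : c ≠ 0 := by
    intro h
    have := key u
    rw [h, mul_zero] at this
    exact zero_ne_one this
  have hUu : ∀ u, Umat hA u i₀ = 1 / c := fun u => by
    rw [eq_div_iff hc0]
    exact key u
  have hnorm : ∑ u : V, Umat hA u i₀ * Umat hA u i₀ = 1 := by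
    simpa using hcol hA i₀ i₀
  have hcard : (Fintype.card V : ℝ) * (1 / c * (1 / c)) = 1 := by
    have hs : ∑ u : V, Umat hA u i₀ * Umat hA u i₀ = ∑ _u : V, (1 / c) * (1 / c) :=
      Finset.sum_congr rfl fun u _ => by rw [hUu u]
    rw [hs, Finset.sum_const, Finset.card_univ, nsmul_eq_mul] at hnorm
    exact hnorm
  have hn0 : (Fintype.card V : ℝ) ≠ 0 := by
    have : 0 < Fintype.card V := Fintype.card_pos_iff.mpr ⟨i₀⟩
    positivity
  rw [hUu u, hUu v, eq_div_iff hn0]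
  linear_combination hcard


def Emat (hA : A.IsHermitian) (c : V → ℝ) : Matrix V V ℝ :=
  Umat hA * Matrix.diagonal c * star (Umat hA)

lemma Emat_apply (c : V → ℝ) (u v : V) :
    Emat hA c u v = ∑ i, c i * Umat hA u i * Umat hA v i := by
  simp [Emat, Matrix.mul_apply, Matrix.diagonal_apply, star_apply, Finset.sum_ite_eq,
    mul_comm, mul_assoc, mul_left_comm]

lemma Emat_spec : Emat hA hA.eigenvalues = A := by
  rw [Emat, Umat]
  exact (hA.spectral_theorem).symm

lemma Emat_one : Emat hA (fun _ => 1) = 1 := by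
  rw [Emat]
  have : (Matrix.diagonal (fun _ : V => (1:ℝ))) = 1 := Matrix.diagonal_one
  rw [this, Matrix.mul_one]
  exact Matrix.mem_unitaryGroup_iff.mp (hA.eigenvectorUnitary).2

lemma Emat_mul (c : V → ℝ) :
    A * Emat hA c = Emat hA (fun i => hA.eigenvalues i * c i) := by
  calc A * Emat hA c = Emat hA hA.eigenvalues * Emat hA c := by rw [Emat_spec]
    _ = Emat hA (fun i => hA.eigenvalues i * c i) := ?_
  rw [Emat, Emat, Emat]
  have hU : star (Umat hA) * Umat hA = 1 := Matrix.mem_unitaryGroup_iff'.mp (hA.eigenvectorUnitary).2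
  calc Umat hA * diagonal hA.eigenvalues * star (Umat hA) * (Umat hA * diagonal c * star (Umat hA))
      = Umat hA * diagonal hA.eigenvalues * (star (Umat hA) * Umat hA) * (diagonal c * star (Umat hA)) := by
        simp only [Matrix.mul_assoc]
    _ = Umat hA * (diagonal hA.eigenvalues * diagonal c) * star (Umat hA) := by
        rw [hU]; noncomm_ring
    _ = Umat hA * diagonal (fun i => hA.eigenvalues i * c i) * star (Umat hA) := by
        rw [Matrix.diagonal_mul_diagonal]
  
lemma Emat_sub (c d : V → ℝ) : Emat hA c - Emat hA d = Emat hA (fun i => c i - d i) := by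
  ext u v
  simp only [Matrix.sub_apply, Emat_apply, sub_mul, ← Finset.sum_sub_distrib]

lemma Emat_smul (r : ℝ) (c : V → ℝ) : r • Emat hA c = Emat hA (fun i => r * c i) := by
  ext u v
  simp only [Matrix.smul_apply, Emat_apply, smul_eq_mul, Finset.mul_sum, mul_assoc]


end Spectral

-- ## Bridge: walk counts as matrices
section Bridge
variable (G : SimpleGraph V)

lemma hdeg_of_reg (k : ℕ) (hreg : kRegular G k) :
    ∀ u, (univ.filter (G.Adj u ·)).card = k := by
  intro u
  calc (univ.filter (G.Adj u ·)).card = Fintype.card {x // G.Adj u x} :=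
        (Fintype.card_subtype _).symm
    _ = Nat.card {x // G.Adj u x} := (Nat.card_eq_fintype_card).symm
    _ = (G.neighborSet u).ncard := Nat.card_coe_set_eq _
    _ = k := hreg u

lemma colsum (k : ℕ) (hdeg : ∀ u, (univ.filter (G.Adj u ·)).card = k) (w : V) :
    ∑ v, adjMat G v w = (k : ℝ) := by
  calc ∑ v, adjMat G v w = ∑ v, (if G.Adj w v then (1:ℝ) else 0) := by
        refine Finset.sum_congr rfl fun v _ => ?_
        by_cases h : G.Adj w v
        · simp [adjMat, h, h.symm]
        · have h2 : ¬ G.Adj v w := fun hh => h hh.symm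
          simp [adjMat, h, h2]
    _ = ((univ.filter (G.Adj w ·)).card : ℝ) := by rw [Finset.sum_boole]
    _ = k := by rw [hdeg w]

lemma walkMat_one : (Matrix.of fun u v => (nbWalkCount G 1 u v : ℝ)) = adjMat G := by
  ext u v
  rw [Matrix.of_apply, nbWalkCount_eq, walk1_card]
  by_cases h : G.Adj u v <;> simp [adjMat, h]

lemma walkMat_two (k : ℕ) (hdeg : ∀ u, (univ.filter (G.Adj u ·)).card = k) :
    (Matrix.of fun u v => (nbWalkCount G 2 u v : ℝ))
      = adjMat G * adjMat G - (k : ℝ) • 1 := by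
  ext u v
  simp only [Matrix.of_apply, Matrix.sub_apply, Matrix.smul_apply, Matrix.mul_apply,
    Matrix.one_apply, smul_eq_mul]
  rw [nbWalkCount_eq, walk2_card]
  have hAA : ∑ w, adjMat G u w * adjMat G w v
      = ((univ.filter (fun w => G.Adj u w ∧ G.Adj w v)).card : ℝ) := by
    rw [← Finset.sum_boole]
    refine Finset.sum_congr rfl fun w _ => ?_
    by_cases h1 : G.Adj u w <;> by_cases h2 : G.Adj w v <;> simp [adjMat, h1, h2]
  by_cases huv : u = v
  · subst huv
    have h3 : (univ.filter (fun w => G.Adj u w ∧ G.Adj w u ∧ u ≠ u)) = ∅ := by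
      apply Finset.eq_empty_iff_forall_notMem.mpr
      intro w hw
      simp only [mem_filter] at hw
      exact hw.2.2.2 rfl
    have h2 : (univ.filter (fun w => G.Adj u w ∧ G.Adj w u))
        = univ.filter (fun w => G.Adj u w) := by
      apply Finset.filter_congr
      intro w _
      exact ⟨fun h => h.1, fun h => ⟨h, h.symm⟩⟩
    rw [h3, hAA, h2, hdeg u]
    simp
  · have h3 : (univ.filter (fun w => G.Adj u w ∧ G.Adj w v ∧ v ≠ u))
        = univ.filter (fun w => G.Adj u w ∧ G.Adj w v) := by
      apply Finset.filter_congr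
      intro w _
      have : v ≠ u := fun h => huv h.symm
      tauto
    rw [h3, hAA, if_neg huv]
    ring

lemma walkMat_rec (k : ℕ) (hk1 : 1 ≤ k) (hdeg : ∀ u, (univ.filter (G.Adj u ·)).card = k)
    (m : ℕ) :
    (Matrix.of fun u v => (nbWalkCount G (m+3) u v : ℝ))
      = adjMat G * (Matrix.of fun u v => (nbWalkCount G (m+2) u v : ℝ))
        - ((k : ℝ) - 1) • (Matrix.of fun u v => (nbWalkCount G (m+1) u v : ℝ)) := by
  ext u v
  simp only [Matrix.of_apply, Matrix.sub_apply, Matrix.smul_apply, Matrix.mul_apply,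
    smul_eq_mul]
  have h := rec_nat G m u v k (hdeg u)
  rw [nbWalkCount_eq G (m+3), nbWalkCount_eq G (m+1)]
  have hsum : ∑ w, (if G.Adj u w then ((univ.filter (nbPred G (m + 2) w v)).card : ℝ) else 0)
      = ∑ w, adjMat G u w * (nbWalkCount G (m+2) w v : ℝ) := by
    refine Finset.sum_congr rfl fun w _ => ?_
    rw [nbWalkCount_eq]
    by_cases hw : G.Adj u w <;> simp [adjMat, hw]
  have hcast := congrArg (fun n : ℕ => (n : ℝ)) h
  push_cast [Nat.cast_sub hk1] at hcast
  rw [← hsum]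
  push_cast
  linarith [hcast]

end Bridge

-- ## Spectral walk formula
section SpectralWalk
variable (G : SimpleGraph V) (hA : (adjMat G).IsHermitian)

lemma walk_spectral (k : ℕ) (hk1 : 1 ≤ k)
    (hdeg : ∀ u, (univ.filter (G.Adj u ·)).card = k) :
    ∀ m : ℕ,
      (Matrix.of fun u v => (nbWalkCount G (m+1) u v : ℝ))
        = Emat hA (fun i => pt k (m+1) (hA.eigenvalues i))
      ∧ (Matrix.of fun u v => (nbWalkCount G (m+2) u v : ℝ))
        = Emat hA (fun i => pt k (m+2) (hA.eigenvalues i)) := by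
  intro m
  induction m with
  | zero =>
    constructor
    · rw [walkMat_one]
      have h1 : (fun i => pt k 1 (hA.eigenvalues i)) = hA.eigenvalues := funext fun i => rfl
      rw [h1, Emat_spec]
    · rw [walkMat_two G k hdeg]
      have h2 : adjMat G * adjMat G = Emat hA (fun i => hA.eigenvalues i * hA.eigenvalues i) := by
        rw [← Emat_mul hA hA.eigenvalues, Emat_spec]
      have h3 : (k:ℝ) • (1 : Matrix V V ℝ) = Emat hA (fun _ => (k:ℝ) * 1) := by
        rw [← Emat_smul hA (k:ℝ) (fun _ => 1), Emat_one]
      have hc : (fun i => hA.eigenvalues i * hA.eigenvalues i - (k:ℝ) * 1)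
          = (fun i => pt k (0+2) (hA.eigenvalues i)) := by
        funext i
        show _ = pt k 2 (hA.eigenvalues i)
        have hpt2 : pt k 2 (hA.eigenvalues i) = hA.eigenvalues i ^ 2 - (k:ℝ) := rfl
        rw [hpt2]
        ring
      rw [h2, h3, Emat_sub, hc]
  | succ m ih =>
    refine ⟨ih.2, ?_⟩
    have hc : (fun i => hA.eigenvalues i * pt k (m+2) (hA.eigenvalues i)
          - ((k:ℝ) - 1) * pt k (m+1) (hA.eigenvalues i))
        = (fun i => pt k (m+3) (hA.eigenvalues i)) :=
      funext fun i => (pt_succ k m (hA.eigenvalues i)).symm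
    rw [show m+1+2 = m+3 from rfl, walkMat_rec G k hk1 hdeg m, ih.1, ih.2,
      Emat_mul hA, Emat_smul hA, Emat_sub hA, hc]

lemma walk_entry (k : ℕ) (hk1 : 1 ≤ k)
    (hdeg : ∀ u, (univ.filter (G.Adj u ·)).card = k) (m : ℕ) (u v : V) :
    (nbWalkCount G (m+2) u v : ℝ)
      = ∑ i, pt k (m+2) (hA.eigenvalues i) * Umat hA u i * Umat hA v i := by
  have h := (walk_spectral G hA k hk1 hdeg m).2
  have h2 := congrFun (congrFun h u) v
  rw [Matrix.of_apply] at h2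
  rw [h2, Emat_apply]

end SpectralWalk

-- ## pt bound
lemma pt_bound (k : ℕ) (hk : 3 ≤ k) (lam : ℝ) (θ : ℝ) (hθ : |θ| ≤ lam) (m : ℕ) :
    |pt k (m+2) θ|
      ≤ ((m:ℝ)+3) * (Real.sqrt ((k:ℝ)-1) * psi (lam / (2 * Real.sqrt ((k:ℝ)-1)))) ^ (m+2)
        + ((m:ℝ)+1) * (Real.sqrt ((k:ℝ)-1) * psi (lam / (2 * Real.sqrt ((k:ℝ)-1)))) ^ m := by
  have hk3 : (3:ℝ) ≤ (k:ℝ) := by exact_mod_cast hk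
  set r := Real.sqrt ((k:ℝ)-1) with hrdef
  have hr2 : r^2 = (k:ℝ)-1 := Real.sq_sqrt (by linarith)
  have hrpos : 0 < r := Real.sqrt_pos.mpr (by linarith)
  set y := θ / (2*r) with hy
  have hθy : θ = 2*r*y := by rw [hy]; field_simp
  rw [hθy, pt_useq k r hr2 m y]
  set Ψ := psi (lam/(2*r)) with hΨdef
  have hΨ1 : (1:ℝ) ≤ Ψ := psi_ge_one _
  have hpy1 : (1:ℝ) ≤ psi |y| := psi_ge_one _
  have hyb : psi |y| ≤ Ψ := by
    apply psi_mono
    rw [hy, abs_div, abs_of_pos (by linarith : (0:ℝ) < 2*r)]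
    exact div_le_div_of_nonneg_right hθ (by linarith)
  have hb2 := useq_abs_bound (m+2) y
  have hb0 := useq_abs_bound m y
  have hr0 : (0:ℝ) ≤ r := le_of_lt hrpos
  have s3 : psi |y| ^ (m+2) ≤ Ψ ^ (m+2) := pow_le_pow_left₀ (by linarith) hyb _
  have s4 : psi |y| ^ m ≤ Ψ ^ m := pow_le_pow_left₀ (by linarith) hyb _
  have hm2 : (0:ℝ) ≤ ((m+2:ℕ):ℝ) + 1 := by positivity
  have hm0 : (0:ℝ) ≤ ((m:ℕ):ℝ) + 1 := by positivity
  calc |r^(m+2) * useq (m+2) y - r^m * useq m y|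
      ≤ |r^(m+2) * useq (m+2) y| + |r^m * useq m y| := abs_sub _ _
    _ = r^(m+2) * |useq (m+2) y| + r^m * |useq m y| := by
        rw [abs_mul, abs_mul, abs_pow, abs_pow, abs_of_nonneg hr0]
    _ ≤ r^(m+2) * ((((m+2:ℕ):ℝ) + 1) * psi |y| ^ (m+2)) + r^m * ((((m:ℕ):ℝ)+1) * psi |y| ^ m) :=
        add_le_add (mul_le_mul_of_nonneg_left hb2 (by positivity))
          (mul_le_mul_of_nonneg_left hb0 (by positivity))
    _ ≤ r^(m+2) * ((((m+2:ℕ):ℝ) + 1) * Ψ ^ (m+2)) + r^m * ((((m:ℕ):ℝ)+1) * Ψ ^ m) := by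
        refine add_le_add (mul_le_mul_of_nonneg_left ?_ (by positivity))
          (mul_le_mul_of_nonneg_left ?_ (by positivity))
        · exact mul_le_mul_of_nonneg_left s3 hm2
        · exact mul_le_mul_of_nonneg_left s4 hm0
    _ = ((m:ℝ)+3) * (r * Ψ)^(m+2) + ((m:ℝ)+1) * (r*Ψ)^m := by
        rw [mul_pow, mul_pow]
        push_cast
        ring

-- ## beta < 1
lemma beta_lt_one (k : ℕ) (hk : 3 ≤ k) (lam : ℝ) (hlamk : lam < k) :
    psi (lam / (2 * Real.sqrt ((k:ℝ)-1))) / Real.sqrt ((k:ℝ)-1) < 1 := by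
  have hk3 : (3:ℝ) ≤ (k:ℝ) := by exact_mod_cast hk
  set r := Real.sqrt ((k:ℝ)-1) with hrdef
  have hr2 : r^2 = (k:ℝ)-1 := Real.sq_sqrt (by linarith)
  have hrpos : 0 < r := Real.sqrt_pos.mpr (by linarith)
  have hr1 : 1 < r := by nlinarith
  rw [div_lt_one hrpos]
  by_cases hx : lam / (2*r) ≤ 1
  · rw [psi, if_pos hx]
    exact hr1
  · push_neg at hx
    rw [psi, if_neg (not_le.mpr hx)]
    set x := lam / (2*r) with hxdef
    have hx0 : (0:ℝ) < x := lt_trans one_pos hx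
    have hlam2 : lam = 2*r*x := by rw [hxdef]; field_simp
    have hK : 2*r*x < r^2+1 := by
      rw [← hlam2, hr2]
      linarith
    have hrx : x < r := by nlinarith
    have hsq : Real.sqrt (x^2-1) < r - x :=
      (Real.sqrt_lt' (by linarith)).mpr (by nlinarith)
    linarith


end NBHelp

/-- **Uniform estimate on the non-backtracking transition probabilities (Appendix,
proof of Lemma 7.2).**  Let `G` be a `k`-regular graph on `n` vertices whose adjacency
matrix has all non-principal eigenvalues bounded in absolute value by `λ̃ < k`.  With
`P̃^{(t)}_{u,v} = A^{(t)}_{u,v} / (k (k−1)^{t−1})` (where `A^{(t)}_{u,v}` counts the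
non-backtracking walks of length `t` from `u` to `v`) and
`β = ψ(λ̃ / (2√(k−1))) / √(k−1)`, we have `β < 1` and for every `t ≥ 2` and vertices
`u, v`:
`|P̃^{(t)}_{u,v} − 1/n| ≤ ((k−1)/k)(t+1) β^t + (1/(k(k−1)))(t−1) β^{t−2}`. -/
theorem nb_transition_uniform_estimate {V : Type} [Fintype V] [DecidableEq V]
    (G : SimpleGraph V) (k : ℕ) (hk : 3 ≤ k) (hreg : kRegular G k)
    (hA : (adjMat G).IsHermitian) (lam : ℝ) (hlamk : lam < k)
    (i₀ : V) (hi₀ : hA.eigenvalues i₀ = k)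
    (hbound : ∀ i, i ≠ i₀ → |hA.eigenvalues i| ≤ lam) :
    psi (lam / (2 * Real.sqrt ((k : ℝ) - 1))) / Real.sqrt ((k : ℝ) - 1) < 1 ∧
    ∀ t, 2 ≤ t → ∀ u v : V,
      |(nbWalkCount G t u v : ℝ) / ((k : ℝ) * ((k : ℝ) - 1) ^ (t - 1)) -
          1 / (Fintype.card V : ℝ)| ≤
        (((k : ℝ) - 1) / k) * ((t : ℝ) + 1) *
            (psi (lam / (2 * Real.sqrt ((k : ℝ) - 1))) / Real.sqrt ((k : ℝ) - 1)) ^ t +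
          (1 / ((k : ℝ) * ((k : ℝ) - 1))) * ((t : ℝ) - 1) *
            (psi (lam / (2 * Real.sqrt ((k : ℝ) - 1))) / Real.sqrt ((k : ℝ) - 1)) ^ (t - 2) := by
  classical
  have hk3 : (3:ℝ) ≤ (k:ℝ) := by exact_mod_cast hk
  constructor
  · exact NBHelp.beta_lt_one k hk lam hlamk
  intro t ht u v
  obtain ⟨m, rfl⟩ : ∃ m, t = m + 2 := ⟨t - 2, by omega⟩
  set r := Real.sqrt ((k:ℝ)-1) with hrdef
  have hr2 : r^2 = (k:ℝ)-1 := Real.sq_sqrt (by linarith)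
  have hrpos : 0 < r := Real.sqrt_pos.mpr (by linarith)
  set Ψ := psi (lam / (2*r)) with hΨdef
  have hΨ1 : (1:ℝ) ≤ Ψ := NBHelp.psi_ge_one _
  have hk1 : 1 ≤ k := by omega
  have hdeg := NBHelp.hdeg_of_reg G k hreg
  have hnpos : (0:ℝ) < (Fintype.card V : ℝ) := by
    have : 0 < Fintype.card V := Fintype.card_pos_iff.mpr ⟨i₀⟩
    exact_mod_cast this
  set n : ℝ := (Fintype.card V : ℝ) with hn
  have hentry := NBHelp.walk_entry G hA k hk1 hdeg m u v
  rw [show m+2-1 = m+1 from by omega, show m+2-2 = m from by omega]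
  set d := (k:ℝ) * ((k:ℝ)-1)^(m+1) with hd
  have hdpos : (0:ℝ) < d := by
    have h1 : (0:ℝ) < (k:ℝ) := by linarith
    have h2 : (0:ℝ) < (k:ℝ) - 1 := by linarith
    positivity
  have hpti₀ : NBHelp.pt k (m+2) (hA.eigenvalues i₀) = d := by
    rw [hi₀, NBHelp.pt_eig]
  have hcolsum : ∀ w, ∑ v, adjMat G v w = (k:ℝ) := NBHelp.colsum G k hdeg
  have hprin : ∀ u v : V, NBHelp.Umat hA u i₀ * NBHelp.Umat hA v i₀ = 1 / n :=
    NBHelp.principal_entry hA i₀ k lam hcolsum hlamk hbound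
  have hsplit : (nbWalkCount G (m+2) u v : ℝ)
      = d * (1/n) + ∑ i ∈ univ.erase i₀,
          NBHelp.pt k (m+2) (hA.eigenvalues i) * NBHelp.Umat hA u i * NBHelp.Umat hA v i := by
    rw [hentry, ← Finset.add_sum_erase univ _ (mem_univ i₀)]
    congr 1
    rw [mul_assoc, hprin u v, hpti₀]
  set S := ∑ i ∈ univ.erase i₀,
      NBHelp.pt k (m+2) (hA.eigenvalues i) * NBHelp.Umat hA u i * NBHelp.Umat hA v i with hS
  have hdiff : (nbWalkCount G (m+2) u v : ℝ)/d - 1/n = S / d := by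
    rw [hsplit]
    field_simp
    ring
  set B := ((m:ℝ)+3) * (r*Ψ)^(m+2) + ((m:ℝ)+1) * (r*Ψ)^m with hB
  have hΨpos : (0:ℝ) < Ψ := lt_of_lt_of_le one_pos hΨ1
  have hBnn : (0:ℝ) ≤ B := by positivity
  have hCS : ∑ i, |NBHelp.Umat hA u i| * |NBHelp.Umat hA v i| ≤ 1 := by
    have h1 : (∑ i, |NBHelp.Umat hA u i| * |NBHelp.Umat hA v i|)^2
        ≤ (∑ i, |NBHelp.Umat hA u i|^2) * (∑ i, |NBHelp.Umat hA v i|^2) :=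
      Finset.sum_mul_sq_le_sq_mul_sq univ _ _
    have h2 : ∑ i, |NBHelp.Umat hA u i|^2 = 1 := by
      have hr := NBHelp.hrow hA u u
      simp only [if_pos rfl] at hr
      calc ∑ i, |NBHelp.Umat hA u i|^2 = ∑ i, NBHelp.Umat hA u i * NBHelp.Umat hA u i := by
            refine Finset.sum_congr rfl fun i _ => by rw [sq_abs, sq]
        _ = 1 := hr
    have h3 : ∑ i, |NBHelp.Umat hA v i|^2 = 1 := by
      have hr := NBHelp.hrow hA v v
      simp only [if_pos rfl] at hr
      calc ∑ i, |NBHelp.Umat hA v i|^2 = ∑ i, NBHelp.Umat hA v i * NBHelp.Umat hA v i := by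
            refine Finset.sum_congr rfl fun i _ => by rw [sq_abs, sq]
        _ = 1 := hr
    have h4 : (0:ℝ) ≤ ∑ i, |NBHelp.Umat hA u i| * |NBHelp.Umat hA v i| :=
      Finset.sum_nonneg fun i _ => mul_nonneg (abs_nonneg _) (abs_nonneg _)
    rw [h2, h3] at h1
    nlinarith [h1, h4]
  have hSbound : |S| ≤ B := by
    calc |S| ≤ ∑ i ∈ univ.erase i₀,
          |NBHelp.pt k (m+2) (hA.eigenvalues i) * NBHelp.Umat hA u i * NBHelp.Umat hA v i| :=
          Finset.abs_sum_le_sum_abs _ _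
      _ ≤ ∑ i ∈ univ.erase i₀, B * (|NBHelp.Umat hA u i| * |NBHelp.Umat hA v i|) := by
          refine Finset.sum_le_sum fun i hi => ?_
          rw [abs_mul, abs_mul, mul_assoc]
          refine mul_le_mul_of_nonneg_right ?_ (mul_nonneg (abs_nonneg _) (abs_nonneg _))
          have hb := NBHelp.pt_bound k hk lam (hA.eigenvalues i) (hbound i (Finset.ne_of_mem_erase hi)) m
          rw [← hrdef, ← hΨdef] at hb
          rw [← hB] at hb
          exact hb
      _ = B * ∑ i ∈ univ.erase i₀, |NBHelp.Umat hA u i| * |NBHelp.Umat hA v i| := by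
          rw [Finset.mul_sum]
      _ ≤ B * ∑ i, |NBHelp.Umat hA u i| * |NBHelp.Umat hA v i| := by
          refine mul_le_mul_of_nonneg_left ?_ hBnn
          refine Finset.sum_le_sum_of_subset_of_nonneg (Finset.erase_subset _ _) ?_
          intro i _ _
          exact mul_nonneg (abs_nonneg _) (abs_nonneg _)
      _ ≤ B * 1 := mul_le_mul_of_nonneg_left hCS hBnn
      _ = B := mul_one B
  have hfinal : |(nbWalkCount G (m+2) u v : ℝ)/d - 1/n| ≤ B / d := by
    rw [hdiff, abs_div, abs_of_pos hdpos]
    exact div_le_div_of_nonneg_right hSbound hdpos.le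
  have hgoal : (((k:ℝ)-1)/k) * (((m+2:ℕ):ℝ)+1) * (Ψ/r)^(m+2)
      + (1/((k:ℝ)*((k:ℝ)-1))) * (((m+2:ℕ):ℝ)-1) * (Ψ/r)^m = B / d := by
    rw [hB, hd, ← hr2]
    have hk0 : (k:ℝ) ≠ 0 := by linarith
    have hrne : r ≠ 0 := ne_of_gt hrpos
    rw [div_pow, div_pow]
    field_simp
    push_cast
    ring
  calc |(nbWalkCount G (m+2) u v : ℝ)/d - 1/n| ≤ B / d := hfinal
    _ = _ := hgoal.symm
end
end
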